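/- Let q be a prime, S a finite set with |S|·q²·q! < (q−1)^q, f : S → ℤ/qℤ any function, and c₁, c₂, λ₁, λ₂, μ₁, μ₂ ∈ ℤ/qℤ fixed. Then there exist functions α : ℤ/qℤ → ℤ/qℤ and β_s : ℤ/qℤ → ℤ/qℤ for each s ∈ S such that for all x, y ∈ ℤ/qℤ and s ∈ S, α(x)β_s(y) + (α(x)+c₁x)(β_s(y)+c₂y) + λ₁α(x) + μ₁x + λ₂β_s(y) + μ₂y + f(s) ≠ 0. -/

import Mathlib

theorem stmt_17 (q : ℕ) (hq : q.Prime) (S : Type) [Fintype S]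
    (hS : Fintype.card S * q ^ 2 * Nat.factorial q < (q - 1) ^ q)
    (f : S → ZMod q) (c₁ c₂ l₁ l₂ m₁ m₂ : ZMod q) :
    ∃ (α : ZMod q → ZMod q) (β : S → ZMod q → ZMod q),
      ∀ (x y : ZMod q) (s : S),
        α x * β s y + (α x + c₁ * x) * (β s y + c₂ * y)
          + l₁ * α x + m₁ * x + l₂ * β s y + m₂ * y + f s ≠ 0 := by
  haveI : Fact q.Prime := ⟨hq⟩
  haveI : NeZero q := ⟨hq.ne_zero⟩
  by_cases hSe : IsEmpty S
  · exact ⟨0, fun s => isEmptyElim s, fun x y s => isEmptyElim s⟩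
  rw [not_isEmpty_iff] at hSe
  have hcardS : 1 ≤ Fintype.card S := Fintype.card_pos
  have hq2 : q ≠ 2 := by
    rintro rfl
    simp [Nat.factorial] at hS
  have h2 : (2 : ZMod q) ≠ 0 := by
    intro h
    have : ((2 : ℕ) : ZMod q) = 0 := by exact_mod_cast h
    rw [ZMod.natCast_eq_zero_iff] at this
    exact hq2 ((Nat.prime_dvd_prime_iff_eq hq Nat.prime_two).mp this)
  have hcardZ : Fintype.card (ZMod q) = q := ZMod.card q
  -- the set of "good-coefficient" alphas
  set A : Finset (ZMod q → ZMod q) :=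
    Fintype.piFinset (fun x : ZMod q =>
      Finset.univ.filter (fun a : ZMod q => 2 * a + c₁ * x + l₂ ≠ 0)) with hAdef
  have hAcard : A.card = (q - 1) ^ q := by
    rw [hAdef, Fintype.card_piFinset]
    have h1 : ∀ x : ZMod q,
        (Finset.univ.filter (fun a : ZMod q => 2 * a + c₁ * x + l₂ ≠ 0)).card = q - 1 := by
      intro x
      have hset : Finset.univ.filter (fun a : ZMod q => 2 * a + c₁ * x + l₂ ≠ 0)
          = Finset.univ.erase (-(c₁ * x + l₂) * 2⁻¹) := by
        ext a
        simp only [Finset.mem_filter, Finset.mem_univ, true_and, Finset.mem_erase, and_true]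
        constructor
        · intro h ha
          apply h
          rw [ha]
          field_simp
          ring
        · intro h hz
          apply h
          have : 2 * a = -(c₁ * x + l₂) := by linear_combination hz
          field_simp
          linear_combination this
      rw [hset, Finset.card_erase_of_mem (Finset.mem_univ _), Finset.card_univ, hcardZ]
    simp [h1]
  -- the bad sets
  set Bad : S × ZMod q × Equiv.Perm (ZMod q) → Finset (ZMod q → ZMod q) :=
    fun p => Fintype.piFinset (fun x : ZMod q =>
      Finset.univ.filter (fun a : ZMod q =>
        2 * a + c₁ * x + l₂ ≠ 0 ∧
        a * (c₂ * p.2.1 + l₁) + c₁ * c₂ * x * p.2.1 + m₁ * x + m₂ * p.2.1 + f p.1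
          + p.2.2 x * (2 * a + c₁ * x + l₂) = 0)) with hBaddef
  have hBadcard : ∀ p, (Bad p).card ≤ q := by
    rintro ⟨s, y, σ⟩
    rw [hBaddef, Fintype.card_piFinset]
    set T : ZMod q → Finset (ZMod q) := fun x => Finset.univ.filter (fun a : ZMod q =>
        2 * a + c₁ * x + l₂ ≠ 0 ∧
        a * (c₂ * y + l₁) + c₁ * c₂ * x * y + m₁ * x + m₂ * y + f s
          + σ x * (2 * a + c₁ * x + l₂) = 0) with hTdef
    set x₀ : ZMod q := σ.symm (-(c₂ * y + l₁) * 2⁻¹) with hx₀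
    have hsmall : ∀ x : ZMod q, x ≠ x₀ → (T x).card ≤ 1 := by
      intro x hx
      have hu : c₂ * y + l₁ + 2 * σ x ≠ 0 := by
        intro hu0
        apply hx
        have hσ : σ x = -(c₂ * y + l₁) * 2⁻¹ := by
          have h2a : 2 * σ x = 2 * (-(c₂ * y + l₁) * 2⁻¹) := by
            field_simp
            linear_combination hu0
          exact mul_left_cancel₀ h2 h2a
        rw [hx₀, ← hσ, Equiv.symm_apply_apply]
      apply Finset.card_le_one.mpr
      intro a ha b hb
      rw [hTdef] at ha hb
      simp only [Finset.mem_filter, Finset.mem_univ, true_and] at ha hb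
      have hab : (a - b) * (c₂ * y + l₁ + 2 * σ x) = 0 := by
        linear_combination ha.2 - hb.2
      rcases mul_eq_zero.mp hab with h | h
      · exact sub_eq_zero.mp h
      · exact absurd h hu
    calc ∏ x : ZMod q, (T x).card
        = (T x₀).card * ∏ x ∈ Finset.univ.erase x₀, (T x).card :=
          (Finset.mul_prod_erase _ _ (Finset.mem_univ x₀)).symm
      _ ≤ q * 1 := by
          apply Nat.mul_le_mul
          · calc (T x₀).card ≤ (Finset.univ : Finset (ZMod q)).card := Finset.card_le_univ _
              _ = q := by rw [Finset.card_univ, hcardZ]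
          · apply Finset.prod_le_one
            · intro x _; exact Nat.zero_le _
            · intro x hx
              exact hsmall x (Finset.ne_of_mem_erase hx)
      _ = q := Nat.mul_one q
  set badset : Finset (ZMod q → ZMod q) := Finset.univ.biUnion Bad with hbsdef
  have hbadcard : badset.card < A.card := by
    calc badset.card ≤ ∑ p : S × ZMod q × Equiv.Perm (ZMod q), (Bad p).card :=
          Finset.card_biUnion_le
      _ ≤ (Finset.univ : Finset (S × ZMod q × Equiv.Perm (ZMod q))).card * q := by
          apply Finset.sum_le_card_nsmul
          intro p _
          exact hBadcard p
      _ = Fintype.card S * q ^ 2 * Nat.factorial q := by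
          rw [Finset.card_univ, Fintype.card_prod, Fintype.card_prod, Fintype.card_perm, hcardZ]
          ring
      _ < (q - 1) ^ q := hS
      _ = A.card := hAcard.symm
  have hns : ¬ A ⊆ badset := fun h => absurd (Finset.card_le_card h) (not_le.mpr hbadcard)
  obtain ⟨α, hαA, hαbad⟩ := Finset.not_subset.mp hns
  have hα1 : ∀ x : ZMod q, 2 * α x + c₁ * x + l₂ ≠ 0 := by
    intro x
    rw [hAdef, Fintype.mem_piFinset] at hαA
    have := hαA x
    simpa using this
  -- pointwise choice of β
  have hb : ∀ (s : S) (y : ZMod q), ∃ b : ZMod q, ∀ x : ZMod q,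
      b * (2 * α x + c₁ * x + l₂) + (α x * (c₂ * y + l₁) + c₁ * c₂ * x * y
        + m₁ * x + m₂ * y + f s) ≠ 0 := by
    intro s y
    by_contra hcon
    push_neg at hcon
    set B : ZMod q → ZMod q := fun x =>
      -(α x * (c₂ * y + l₁) + c₁ * c₂ * x * y + m₁ * x + m₂ * y + f s)
        * (2 * α x + c₁ * x + l₂)⁻¹ with hBdef
    have hsurj : Function.Surjective B := by
      intro b
      obtain ⟨x, hx⟩ := hcon b
      refine ⟨x, ?_⟩
      show -(α x * (c₂ * y + l₁) + c₁ * c₂ * x * y + m₁ * x + m₂ * y + f s)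
        * (2 * α x + c₁ * x + l₂)⁻¹ = b
      rw [mul_inv_eq_iff_eq_mul₀ (hα1 x)]
      linear_combination -hx
    have hbij : Function.Bijective B := (Finite.surjective_iff_bijective).mp hsurj
    set σ : Equiv.Perm (ZMod q) := Equiv.ofBijective B hbij with hσdef
    apply hαbad
    rw [hbsdef]
    apply Finset.mem_biUnion.mpr
    refine ⟨(s, y, σ), Finset.mem_univ _, ?_⟩
    rw [hBaddef, Fintype.mem_piFinset]
    intro x
    simp only [Finset.mem_filter, Finset.mem_univ, true_and]
    refine ⟨hα1 x, ?_⟩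
    have hσx : σ x = B x := rfl
    rw [hσx, hBdef]
    have := mul_inv_cancel_right₀ (hα1 x)
      (-(α x * (c₂ * y + l₁) + c₁ * c₂ * x * y + m₁ * x + m₂ * y + f s))
    linear_combination this
  refine ⟨α, fun s y => (hb s y).choose, ?_⟩
  intro x y s hcontra
  exact (hb s y).choose_spec x (by linear_combination hcontra)
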